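/- Assume W is stochastic. The map z* ↦ z*/ϖ(z*) is a bijection from the set of nonnegative normalizable fixed points of W, namely {z* ∈ ℝ^{n+ν} : W(z*) = z*, all coordinates of z* ≥ 0, ϖ(z*) > 0}, onto the set of fixed points of the normalized gonosomal operator V in S^{n,ν}, namely {z ∈ S^{n,ν} : ϖ(W(z)) ≠ 0 and V(z) = z}. -/

import Mathlib

/-- The gonosomal operator `W` on `ℝ^{n+ν}`. -/
noncomputable def gonW {n ν : ℕ} (γ : Fin n → Fin ν → Fin n → ℝ)
    (γt : Fin n → Fin ν → Fin ν → ℝ)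
    (z : (Fin n → ℝ) × (Fin ν → ℝ)) : (Fin n → ℝ) × (Fin ν → ℝ) :=
  (fun k => ∑ i, ∑ j, γ i j k * z.1 i * z.2 j,
   fun r => ∑ i, ∑ j, γt i j r * z.1 i * z.2 j)

/-- The linear form `ϖ(z) = Σ x_i + Σ y_j`. -/
noncomputable def gonPi {n ν : ℕ} (z : (Fin n → ℝ) × (Fin ν → ℝ)) : ℝ :=
  (∑ i, z.1 i) + (∑ j, z.2 j)

/-- The normalized gonosomal operator `V(z) = W(z)/ϖ(W(z))`
(junk value `0` when `ϖ(W(z)) = 0`). -/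
noncomputable def gonV {n ν : ℕ} (γ : Fin n → Fin ν → Fin n → ℝ)
    (γt : Fin n → Fin ν → Fin ν → ℝ)
    (z : (Fin n → ℝ) × (Fin ν → ℝ)) : (Fin n → ℝ) × (Fin ν → ℝ) :=
  (gonPi (gonW γ γt z))⁻¹ • gonW γ γt z


lemma gonPi0 {n ν : ℕ} (z : (Fin n → ℝ) × (Fin ν → ℝ)) :
    gonPi z = (∑ i, z.1 i) + (∑ j, z.2 j) := rfl

lemma gonPi_smul {n ν : ℕ} (c : ℝ) (z : (Fin n → ℝ) × (Fin ν → ℝ)) :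
    gonPi (c • z) = c * gonPi z := by
  simp [gonPi, Finset.mul_sum, mul_add]

lemma gonW_smul {n ν : ℕ} (γ : Fin n → Fin ν → Fin n → ℝ)
    (γt : Fin n → Fin ν → Fin ν → ℝ) (c : ℝ) (z : (Fin n → ℝ) × (Fin ν → ℝ)) :
    gonW γ γt (c • z) = (c * c) • gonW γ γt z := by
  unfold gonW
  refine Prod.ext ?_ ?_ <;> funext k <;>
    simp only [Prod.smul_fst, Prod.smul_snd, Pi.smul_apply, smul_eq_mul,
      Finset.mul_sum] <;>
    exact Finset.sum_congr rfl fun i _ => Finset.sum_congr rfl fun j _ => by ring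

lemma gonPi_gonW {n ν : ℕ} (γ : Fin n → Fin ν → Fin n → ℝ)
    (γt : Fin n → Fin ν → Fin ν → ℝ)
    (hsum : ∀ (i : Fin n) (j : Fin ν), (∑ k, γ i j k) + (∑ r, γt i j r) = 1)
    (z : (Fin n → ℝ) × (Fin ν → ℝ)) :
    gonPi (gonW γ γt z) = (∑ i, z.1 i) * (∑ j, z.2 j) := by
  unfold gonPi gonW
  simp only
  rw [Finset.sum_comm, Finset.sum_comm (f := fun r i => ∑ j, γt i j r * z.1 i * z.2 j),
    Finset.sum_mul_sum, ← Finset.sum_add_distrib]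
  refine Finset.sum_congr rfl fun i _ => ?_
  rw [Finset.sum_comm, Finset.sum_comm (f := fun r j => γt i j r * z.1 i * z.2 j),
    ← Finset.sum_add_distrib]
  refine Finset.sum_congr rfl fun j _ => ?_
  have h := hsum i j
  have : (∑ k, γ i j k * z.1 i * z.2 j) + (∑ r, γt i j r * z.1 i * z.2 j)
      = ((∑ k, γ i j k) + (∑ r, γt i j r)) * (z.1 i * z.2 j) := by
    rw [add_mul, Finset.sum_mul, Finset.sum_mul]
    congr 1 <;> exact Finset.sum_congr rfl fun _ _ => by ring
  rw [this, h, one_mul]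

/-- `z* ↦ z*/ϖ(z*)` is a bijection from the nonnegative normalizable fixed
points of `W` onto the fixed points of `V` in `S^{n,ν}`. -/
theorem gonosomal_fixedPoints_W_V_bijection
    {n ν : ℕ} (hn : 1 ≤ n) (hν : 1 ≤ ν)
    (γ : Fin n → Fin ν → Fin n → ℝ) (γt : Fin n → Fin ν → Fin ν → ℝ)
    (hγ : ∀ i j k, 0 ≤ γ i j k) (hγt : ∀ i j r, 0 ≤ γt i j r)
    (hsum : ∀ (i : Fin n) (j : Fin ν), (∑ k, γ i j k) + (∑ r, γt i j r) = 1) :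
    Set.BijOn (fun z : (Fin n → ℝ) × (Fin ν → ℝ) => (gonPi z)⁻¹ • z)
      {z | gonW γ γt z = z ∧ (∀ i, 0 ≤ z.1 i) ∧ (∀ j, 0 ≤ z.2 j) ∧
        0 < gonPi z}
      {z | ((∀ i, 0 ≤ z.1 i) ∧ (∀ j, 0 ≤ z.2 j) ∧ gonPi z = 1 ∧
        ¬ (z.1 = 0 ∨ z.2 = 0)) ∧ gonPi (gonW γ γt z) ≠ 0 ∧
        gonV γ γt z = z} := by
  have sum_pos_of_ne : ∀ {m : ℕ} (x : Fin m → ℝ), (∀ i, 0 ≤ x i) → x ≠ 0 →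
      0 < ∑ i, x i := by
    intro m x hx hne
    rcases lt_or_eq_of_le (Finset.sum_nonneg fun i _ => hx i) with h | h
    · exact h
    · exfalso; apply hne; funext i
      have := (Finset.sum_eq_zero_iff_of_nonneg (fun i _ => hx i)).1 h.symm
      exact this i (Finset.mem_univ i)
  have ne_of_sum_pos : ∀ {m : ℕ} (x : Fin m → ℝ), 0 < ∑ i, x i → x ≠ 0 := by
    intro m x h hx; rw [hx] at h; simp at h
  constructor
  · -- MapsTo
    rintro z ⟨hfix, hx, hy, hs⟩
    set s := gonPi z with hsdef
    have hXY : (∑ i, z.1 i) * (∑ j, z.2 j) = s := by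
      rw [← gonPi_gonW γ γt hsum z, hfix]
    have hX : 0 < ∑ i, z.1 i := by
      rcases lt_or_eq_of_le (Finset.sum_nonneg fun i _ => hx i) with h | h
      · exact h
      · exfalso; rw [← h, zero_mul] at hXY; exact absurd hXY.symm (ne_of_gt hs)
    have hY : 0 < ∑ j, z.2 j := by
      rcases lt_or_eq_of_le (Finset.sum_nonneg fun j _ => hy j) with h | h
      · exact h
      · exfalso; rw [← h, mul_zero] at hXY; exact absurd hXY.symm (ne_of_gt hs)
    have hsne : s ≠ 0 := ne_of_gt hs
    have hsinv : (0:ℝ) < s⁻¹ := inv_pos.2 hs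
    have hpiw : gonPi (s⁻¹ • z) = 1 := by
      rw [gonPi_smul, ← hsdef, inv_mul_cancel₀ hsne]
    have hWw : gonW γ γt (s⁻¹ • z) = (s⁻¹ * s⁻¹) • z := by
      rw [gonW_smul, hfix]
    have hpiWw : gonPi (gonW γ γt (s⁻¹ • z)) = s⁻¹ := by
      rw [hWw, gonPi_smul, ← hsdef]
      field_simp
    refine ⟨⟨fun i => ?_, fun j => ?_, hpiw, ?_⟩, ?_, ?_⟩
    · simp only [Prod.smul_fst, Pi.smul_apply, smul_eq_mul]
      exact mul_nonneg hsinv.le (hx i)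
    · simp only [Prod.smul_snd, Pi.smul_apply, smul_eq_mul]
      exact mul_nonneg hsinv.le (hy j)
    · rintro (h1 | h2)
      · have : (s⁻¹ • z).1 = s⁻¹ • z.1 := rfl
        rw [this, smul_eq_zero] at h1
        rcases h1 with h1 | h1
        · exact absurd h1 (ne_of_gt hsinv)
        · rw [h1] at hX; simp at hX
      · have : (s⁻¹ • z).2 = s⁻¹ • z.2 := rfl
        rw [this, smul_eq_zero] at h2
        rcases h2 with h2 | h2
        · exact absurd h2 (ne_of_gt hsinv)
        · rw [h2] at hY; simp at hY
    · rw [hpiWw]; exact inv_ne_zero hsne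
    · show gonV γ γt (s⁻¹ • z) = s⁻¹ • z
      rw [gonV, hpiWw, hWw, inv_inv, smul_smul]
      congr 1
      field_simp
  constructor
  · -- InjOn
    rintro z ⟨hfz, hxz, hyz, hsz⟩ w ⟨hfw, hxw, hyw, hsw⟩ heq
    simp only at heq
    set s := gonPi z
    set t := gonPi w
    have hsne : s ≠ 0 := ne_of_gt hsz
    have htne : t ≠ 0 := ne_of_gt hsw
    have hz : z = (s * t⁻¹) • w := by
      have h := congrArg (fun v => s • v) heq
      simp only [smul_smul, mul_inv_cancel₀ hsne, one_smul] at h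
      exact h
    set c := s * t⁻¹ with hc
    have hcpos : 0 < c := mul_pos hsz (inv_pos.2 hsw)
    have h1 : s = c * t := by
      show gonPi z = c * t
      rw [hz, gonPi_smul]
    have h2 : s = (c * c) * t := by
      show gonPi z = (c * c) * t
      conv_lhs => rw [← hfz, hz]
      rw [gonW_smul, hfw, gonPi_smul]
    have hc1 : c = 1 := by
      have : c * t = (c * c) * t := by rw [← h1, ← h2]
      have h3 : c = c * c := mul_right_cancel₀ htne this
      nlinarith [hcpos]
    rw [hz, hc1, one_smul]
  · -- SurjOn
    rintro z ⟨⟨hx, hy, hpi1, hne⟩, hpW, hV⟩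
    set p := gonPi (gonW γ γt z) with hp
    have hXY : p = (∑ i, z.1 i) * (∑ j, z.2 j) := gonPi_gonW γ γt hsum z
    have hppos : 0 < p := by
      rcases lt_or_eq_of_le (mul_nonneg (Finset.sum_nonneg fun i _ => hx i)
        (Finset.sum_nonneg fun j _ => hy j)) with h | h
      · rw [hXY]; exact h
      · exact absurd (hXY.trans h.symm) hpW
    have hpne : p ≠ 0 := ne_of_gt hppos
    have hWz : gonW γ γt z = p • z := by
      have := hV
      rw [gonV, ← hp] at this
      have := congrArg (fun v => p • v) this
      simpa [smul_smul, mul_inv_cancel₀ hpne, one_smul] using this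
    refine ⟨p⁻¹ • z, ⟨?_, ?_, ?_, ?_⟩, ?_⟩
    · rw [gonW_smul, hWz, smul_smul]
      congr 1
      field_simp
    · intro i
      simp only [Prod.smul_fst, Pi.smul_apply, smul_eq_mul]
      exact mul_nonneg (inv_pos.2 hppos).le (hx i)
    · intro j
      simp only [Prod.smul_snd, Pi.smul_apply, smul_eq_mul]
      exact mul_nonneg (inv_pos.2 hppos).le (hy j)
    · rw [gonPi_smul, hpi1, mul_one]
      exact inv_pos.2 hppos
    · simp only
      rw [gonPi_smul, hpi1, mul_one, inv_inv, smul_smul,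
        mul_inv_cancel₀ hpne, one_smul]
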